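/- Let a < b be real numbers and let w : ℝ → ℝ be twice differentiable on [a, b] with w(a) ≥ 0, w(b) ≤ 0, w′(b) < 0, and w″(x) ≤ 0 for all x ∈ [a, b]. Define the Newton iterates x₀ = b and x_{n+1} = x_n − w(x_n)/w′(x_n). Then every iterate lies in [a, b], the sequence (x_n) is nonincreasing, and it converges to a point L ∈ [a, b] with w(L) = 0. -/

import Mathlib

theorem stmt11 (a b : ℝ) (hab : a < b) (w : ℝ → ℝ)
    (hw : ∀ x ∈ Set.Icc a b, DifferentiableAt ℝ w x)
    (hw' : ∀ x ∈ Set.Icc a b, DifferentiableAt ℝ (deriv w) x)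
    (hwa : 0 ≤ w a) (hwb : w b ≤ 0) (hw'b : deriv w b < 0)
    (hw'' : ∀ x ∈ Set.Icc a b, deriv (deriv w) x ≤ 0)
    (x : ℕ → ℝ) (hx0 : x 0 = b)
    (hxs : ∀ n : ℕ, x (n + 1) = x n - w (x n) / deriv w (x n)) :
    (∀ n : ℕ, x n ∈ Set.Icc a b) ∧
    (∀ n : ℕ, x (n + 1) ≤ x n) ∧
    ∃ L ∈ Set.Icc a b, Filter.Tendsto x Filter.atTop (nhds L) ∧ w L = 0 := by
  have hcont : ContinuousOn w (Set.Icc a b) :=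
    fun z hz => (hw z hz).continuousAt.continuousWithinAt
  have hcont' : ContinuousOn (deriv w) (Set.Icc a b) :=
    fun z hz => (hw' z hz).continuousAt.continuousWithinAt
  have hanti : AntitoneOn (deriv w) (Set.Icc a b) := by
    apply antitoneOn_of_deriv_nonpos (convex_Icc a b) hcont'
    · intro z hz
      rw [interior_Icc] at hz
      exact (hw' z (Set.Ioo_subset_Icc_self hz)).differentiableWithinAt
    · intro z hz
      rw [interior_Icc] at hz
      exact hw'' z (Set.Ioo_subset_Icc_self hz)
  -- tangent line inequality (concavity)
  have tang : ∀ p ∈ Set.Icc a b, ∀ q ∈ Set.Icc a b,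
      w q ≤ w p + deriv w p * (q - p) := by
    intro p hp q hq
    rcases lt_trichotomy q p with h | h | h
    · obtain ⟨c, hc, hc'⟩ := exists_deriv_eq_slope w h
        (hcont.mono (Set.Icc_subset_Icc hq.1 hp.2))
        (fun z hz => (hw z ⟨le_trans hq.1 hz.1.le, le_trans hz.2.le hp.2⟩).differentiableWithinAt)
      have hcm : c ∈ Set.Icc a b := ⟨le_trans hq.1 hc.1.le, le_trans hc.2.le hp.2⟩
      have := hanti hcm hp hc.2.le
      rw [hc'] at this
      have hpq : 0 < p - q := by linarith
      nlinarith [mul_le_mul_of_nonneg_right this hpq.le,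
        div_mul_cancel₀ (w p - w q) (ne_of_gt hpq)]
    · simp [h]
    · obtain ⟨c, hc, hc'⟩ := exists_deriv_eq_slope w h
        (hcont.mono (Set.Icc_subset_Icc hp.1 hq.2))
        (fun z hz => (hw z ⟨le_trans hp.1 hz.1.le, le_trans hz.2.le hq.2⟩).differentiableWithinAt)
      have hcm : c ∈ Set.Icc a b := ⟨le_trans hp.1 hc.1.le, le_trans hc.2.le hq.2⟩
      have := hanti hp hcm hc.1.le
      rw [hc'] at this
      have hpq : 0 < q - p := by linarith
      nlinarith [mul_le_mul_of_nonneg_right this hpq.le,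
        div_mul_cancel₀ (w q - w p) (ne_of_gt hpq)]
  have hamem : a ∈ Set.Icc a b := ⟨le_refl a, hab.le⟩
  -- one Newton step
  have step : ∀ z, z ∈ Set.Icc a b → w z ≤ 0 → (deriv w z < 0 ∨ w z = 0) →
      a ≤ z - w z / deriv w z ∧ z - w z / deriv w z ≤ z ∧
      w (z - w z / deriv w z) ≤ 0 ∧
      (deriv w (z - w z / deriv w z) < 0 ∨ w (z - w z / deriv w z) = 0) := by
    intro z hz hwz hdis
    rcases eq_or_lt_of_le hwz with h0 | hneg
    · -- w z = 0, step is trivial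
      have hfix : z - w z / deriv w z = z := by rw [h0]; simp
      rw [hfix]
      refine ⟨hz.1, le_refl z, hwz, ?_⟩
      rcases hdis with h | h
      · exact Or.inl h
      · exact Or.inr h
    · have hd : deriv w z < 0 := by
        rcases hdis with h | h
        · exact h
        · exact absurd h (ne_of_lt hneg)
      have hdne : deriv w z ≠ 0 := ne_of_lt hd
      set z' := z - w z / deriv w z with hz'
      have ht : 0 < w z / deriv w z := div_pos_of_neg_of_neg hneg hd
      have hlt : z' < z := by simp [hz']; linarith
      have hwz_eq : w z = deriv w z * (z - z') := by
        rw [hz', sub_sub_cancel]; field_simp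
      have haz' : a ≤ z' := by
        by_contra hc
        push_neg at hc
        have := tang z hz a hamem
        nlinarith
      have hz'mem : z' ∈ Set.Icc a b := ⟨haz', le_trans hlt.le hz.2⟩
      have hwz' : w z' ≤ 0 := by
        have := tang z hz z' hz'mem
        nlinarith
      refine ⟨haz', hlt.le, hwz', ?_⟩
      rcases lt_or_ge (deriv w z') 0 with h | h
      · exact Or.inl h
      · right
        have := tang z' hz'mem a hamem
        nlinarith
  -- invariant
  have P : ∀ n, x n ∈ Set.Icc a b ∧ w (x n) ≤ 0 ∧ (deriv w (x n) < 0 ∨ w (x n) = 0) := by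
    intro n
    induction n with
    | zero => exact ⟨by rw [hx0]; exact ⟨hab.le, le_refl b⟩, by rw [hx0]; exact hwb,
        Or.inl (by rw [hx0]; exact hw'b)⟩
    | succ k ih =>
      obtain ⟨h1, h2, h3⟩ := ih
      obtain ⟨s1, s2, s3, s4⟩ := step (x k) h1 h2 h3
      rw [hxs k]
      exact ⟨⟨s1, le_trans s2 h1.2⟩, s3, s4⟩
  have hmem : ∀ n, x n ∈ Set.Icc a b := fun n => (P n).1
  have hmono : ∀ n, x (n + 1) ≤ x n := by
    intro n
    obtain ⟨h1, h2, h3⟩ := P n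
    rw [hxs n]
    exact (step (x n) h1 h2 h3).2.1
  refine ⟨hmem, hmono, ?_⟩
  have hantx : Antitone x := antitone_nat_of_succ_le hmono
  have hbdd : BddBelow (Set.range x) := ⟨a, fun y ⟨n, hn⟩ => hn ▸ (hmem n).1⟩
  set L := ⨅ n, x n with hLdef
  have hL : Filter.Tendsto x Filter.atTop (nhds L) :=
    tendsto_atTop_ciInf hantx hbdd
  have hLmem : L ∈ Set.Icc a b :=
    ⟨le_ciInf fun n => (hmem n).1, le_trans (ciInf_le hbdd 0) (by rw [hx0])⟩
  refine ⟨L, hLmem, hL, ?_⟩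
  -- the quotient tends to 0
  have hshift : Filter.Tendsto (fun n => x (n + 1)) Filter.atTop (nhds L) :=
    hL.comp (Filter.tendsto_add_atTop_nat 1)
  have hq0 : Filter.Tendsto (fun n => w (x n) / deriv w (x n)) Filter.atTop (nhds 0) := by
    have : Filter.Tendsto (fun n => x n - x (n + 1)) Filter.atTop (nhds (L - L)) :=
      hL.sub hshift
    rw [sub_self] at this
    convert this using 2 with n
    rw [hxs n]; ring
  have hwL : Filter.Tendsto (fun n => w (x n)) Filter.atTop (nhds (w L)) :=
    ((hw L hLmem).continuousAt.tendsto).comp hL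
  have hw'L : Filter.Tendsto (fun n => deriv w (x n)) Filter.atTop (nhds (deriv w L)) :=
    ((hw' L hLmem).continuousAt.tendsto).comp hL
  rcases eq_or_ne (deriv w L) 0 with hdL | hdL
  · have hle : w L ≤ 0 :=
      le_of_tendsto hwL (Filter.Eventually.of_forall fun n => (P n).2.1)
    have := tang L hLmem a hamem
    rw [hdL] at this
    linarith
  · have : Filter.Tendsto (fun n => w (x n) / deriv w (x n)) Filter.atTop
        (nhds (w L / deriv w L)) := hwL.div hw'L hdL
    have heq := tendsto_nhds_unique this hq0
    field_simp at heq
    simpa using heq
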